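/- Let G be a graph with a 𝒢F-elimination forest (F, (B_u)_{u ∈ V(F)}) and let η be an integer with ed_{𝒢F}(G) ≤ η (in particular the height of the elimination forest is at most η). Let X be a minimum feedback vertex set of G and let v be a leaf of F. Then |X ∩ B_v| ≤ η. -/

import Mathlib

/-- `X` is a feedback vertex set of `G`: removing `X` leaves an acyclic graph. -/
def IsFVS {V : Type} (G : SimpleGraph V) (X : Set V) : Prop :=
  (G.induce Xᶜ).IsAcyclic

/-- `X` is a minimum feedback vertex set of `G`. -/
def IsMinFVS {V : Type} (G : SimpleGraph V) (X : Set V) : Prop :=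
  IsFVS G X ∧ ∀ Y : Set V, IsFVS G Y → X.ncard ≤ Y.ncard

/-- Every connected component of `G[A]` contains at most one vertex of `T`. -/
def SeparatedIn {V : Type} (G : SimpleGraph V) (A T : Set V) : Prop :=
  ∀ (t₁ t₂ : V) (h₁ : t₁ ∈ A) (h₂ : t₂ ∈ A), t₁ ∈ T → t₂ ∈ T →
    (G.induce A).Reachable ⟨t₁, h₁⟩ ⟨t₂, h₂⟩ → t₁ = t₂

/-- `X` misses some vertex of `S`, or leaves two vertices of `T` connected in `G - X`. -/
def BadFor {V : Type} (G : SimpleGraph V) (S T X : Set V) : Prop :=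
  (¬ S ⊆ X) ∨ ¬ SeparatedIn G Xᶜ T
/-- `ElimLE G Base A k` holds iff the elimination distance of `G[A]` to the class of
graphs described by the base predicate `Base` is at most `k`: either the base predicate
already holds, or from each connected component one vertex can be deleted so that the
remainder has elimination distance at most `k - 1`. -/
inductive ElimLE {V : Type} (G : SimpleGraph V) (Base : Set V → Prop) : Set V → ℕ → Prop
  | base (A : Set V) (k : ℕ) (h : Base A) : ElimLE G Base A k
  | step (A : Set V) (k : ℕ)
      (v : (G.induce A).ConnectedComponent → ↥A)
      (hv : ∀ C : (G.induce A).ConnectedComponent, v C ∈ C.supp)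
      (h : ∀ C : (G.induce A).ConnectedComponent,
        ElimLE G Base ((Subtype.val '' C.supp) \ {(v C).val}) k) :
      ElimLE G Base A (k + 1)

/-- The elimination distance of `G` to a forest. -/
noncomputable def edForest {V : Type} (G : SimpleGraph V) : ℕ :=
  sInf {k | ElimLE G (fun A => (G.induce A).IsAcyclic) Set.univ k}
/-- A `𝒢F`-elimination forest of `G` with node type `ι`: a rooted forest given by a
parent function (roots are their own parent, and iterating the parent function from any
node eventually reaches a root), together with bags that partition `V(G)`, such that
every non-leaf bag is a singleton, every leaf bag induces a connected forest, and the
endpoints of every edge of `G` lie in bags that are in ancestor-descendant relation. -/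
structure ElimForestOn (V ι : Type) (G : SimpleGraph V) where
  parent : ι → ι
  bag : ι → Set V
  wf : ∀ u : ι, ∃ n : ℕ, parent^[n + 1] u = parent^[n] u
  bag_exists : ∀ v : V, ∃ u : ι, v ∈ bag u
  bag_unique : ∀ (v : V) (u w : ι), v ∈ bag u → v ∈ bag w → u = w
  nonleaf_singleton : ∀ u : ι, (∃ c : ι, c ≠ u ∧ parent c = u) → ∃ x : V, bag u = {x}
  leaf_forest : ∀ u : ι, (∀ c : ι, parent c = u → c = u) → (G.induce (bag u)).IsAcyclic
  leaf_connected : ∀ u : ι, (∀ c : ι, parent c = u → c = u) → (G.induce (bag u)).Connected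
  edge_anc : ∀ v w : V, G.Adj v w → ∀ s t : ι, v ∈ bag s → w ∈ bag t →
    (∃ n : ℕ, parent^[n] t = s) ∨ (∃ n : ℕ, parent^[n] s = t)

namespace ElimForestOn

variable {V ι : Type} {G : SimpleGraph V}

/-- A node is a leaf when it has no (proper) children. -/
def IsLeaf (E : ElimForestOn V ι G) (u : ι) : Prop :=
  ∀ c : ι, E.parent c = u → c = u

/-- The elimination forest is a tree: it has a unique root. -/
def IsTree (E : ElimForestOn V ι G) : Prop :=
  (∃ r : ι, E.parent r = r) ∧ ∀ u v : ι, E.parent u = u → E.parent v = v → u = v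

/-- `tree[c]`: the union of the bags of `c` and of all descendants of `c`. -/
def treeSet (E : ElimForestOn V ι G) (c : ι) : Set V :=
  {v | ∃ w : ι, (∃ n : ℕ, E.parent^[n] w = c) ∧ v ∈ E.bag w}

/-- The depth of a node: the number of edges on the path to its root. -/
noncomputable def depth (E : ElimForestOn V ι G) (u : ι) : ℕ :=
  sInf {n | E.parent^[n + 1] u = E.parent^[n] u}

/-- The height of the elimination forest: the maximum depth of a node. -/
noncomputable def height (E : ElimForestOn V ι G) : ℕ :=
  sSup (Set.range E.depth)

end ElimForestOn


open SimpleGraph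

/-- Lift a walk in `G` with support in `t` to a walk in `G.induce t`. -/
lemma lift_walk_exists {V : Type} {G : SimpleGraph V} (t : Set V) {x y : V}
    (hx : x ∈ t) (hy : y ∈ t) (p : G.Walk x y) (hp : ∀ z ∈ p.support, z ∈ t) :
    ∃ q : (G.induce t).Walk ⟨x, hx⟩ ⟨y, hy⟩,
      q.map (SimpleGraph.Embedding.induce (G := G) t).toHom = p := by
  induction p with
  | nil => exact ⟨SimpleGraph.Walk.nil, rfl⟩
  | @cons a b c' hab p ih =>
    have hb : b ∈ t := hp b (by simp)
    obtain ⟨q, hq⟩ := ih hb hy (fun z hz => hp z (by rw [SimpleGraph.Walk.support_cons]; exact List.mem_cons_of_mem _ hz))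
    exact ⟨SimpleGraph.Walk.cons (by exact hab) q, by subst hq; rfl⟩

lemma no_cycle_transfer {V : Type} {G : SimpleGraph V} {s t : Set V}
    (ht : (G.induce t).IsAcyclic) {a : ↥s} (c : (G.induce s).Walk a a)
    (hc : c.IsCycle) (hsup : ∀ z ∈ c.support, (z : V) ∈ t) : False := by
  have hinj : Function.Injective ⇑(SimpleGraph.Embedding.induce (G := G) s).toHom :=
    Subtype.val_injective
  set p := c.map (SimpleGraph.Embedding.induce (G := G) s).toHom with hpdef
  have hpc : p.IsCycle := hc.map hinj
  have hps : ∀ z ∈ p.support, z ∈ t := by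
    intro z hz
    rw [hpdef, SimpleGraph.Walk.support_map] at hz
    obtain ⟨w, hw, rfl⟩ := List.mem_map.mp hz
    exact hsup w hw
  have hat : (a : V) ∈ t := hsup a c.start_mem_support
  obtain ⟨q, hq⟩ := lift_walk_exists t hat hat p hps
  have : q.IsCycle := by
    rw [← SimpleGraph.Walk.map_isCycle_iff_of_injective
      (f := (SimpleGraph.Embedding.induce (G := G) t).toHom) Subtype.val_injective, hq]
    exact hpc
  exact ht q this

lemma walk_support_closed {W : Type} {H : SimpleGraph W} {P : W → Prop}
    (hP : ∀ x y, H.Adj x y → P x → P y) {x y : W} (p : H.Walk x y) (hx : P x) :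
    ∀ z ∈ p.support, P z := by
  induction p with
  | nil => intro z hz; simp at hz; subst hz; exact hx
  | cons hab p ih =>
    intro z hz
    rw [SimpleGraph.Walk.support_cons] at hz
    rcases List.mem_cons.mp hz with rfl | hz
    · exact hx
    · exact ih (hP _ _ hab hx) z hz

lemma iterate_stab {α : Type*} (f : α → α) (a : α) {n : ℕ}
    (h : f^[n + 1] a = f^[n] a) : ∀ m, n ≤ m → f^[m] a = f^[n] a := by
  intro m hm
  induction m with
  | zero => have : n = 0 := Nat.le_zero.mp hm; subst this; rfl
  | succ k ih =>
    rcases Nat.lt_or_ge n (k + 1) with hlt | hge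
    · have hk : n ≤ k := by omega
      rw [Function.iterate_succ_apply', ih hk]
      exact (Function.iterate_succ_apply' f n a).symm.trans h
    · have : n = k + 1 := by omega
      subst this; rfl

theorem stmt4 (V ι : Type) [Fintype V] [Fintype ι] (G : SimpleGraph V)
    (E : ElimForestOn V ι G) (η : ℕ)
    (hed : ElimLE G (fun A => (G.induce A).IsAcyclic) Set.univ η)
    (hheight : E.height ≤ η)
    (X : Set V) (hX : IsMinFVS G X) (v : ι) (hleaf : E.IsLeaf v) :
    (X ∩ E.bag v).ncard ≤ η := by
  classical
  set B := E.bag v with hB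
  have hdmem : E.parent^[E.depth v + 1] v = E.parent^[E.depth v] v :=
    Nat.sInf_mem (E.wf v)
  set d := E.depth v with hd
  have hdη : d ≤ η :=
    le_trans (le_trans (le_csSup ((Set.finite_range E.depth).bddAbove)
      (Set.mem_range_self v)) le_rfl) hheight
  have hstab : ∀ m, d ≤ m → E.parent^[m] v = E.parent^[d] v :=
    iterate_stab E.parent v hdmem
  have hleafanc : ∀ (n : ℕ) (t : ι), E.parent^[n] t = v → t = v := by
    intro n
    induction n with
    | zero => intro t ht; exact ht
    | succ k ih =>
      intro t ht
      rw [Function.iterate_succ_apply'] at ht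
      exact ih t (hleaf _ ht)
  have hsingl : ∀ u : ι, u ≠ v → (∃ n, E.parent^[n] v = u) → ∃ x, E.bag u = {x} := by
    rintro u hune ⟨n, hn⟩
    have hne : {m | E.parent^[m] v = u}.Nonempty := ⟨n, hn⟩
    set m := sInf {m | E.parent^[m] v = u} with hm
    have hmmem : E.parent^[m] v = u := Nat.sInf_mem hne
    have hm0 : m ≠ 0 := by
      intro h
      rw [h] at hmmem
      exact hune hmmem.symm
    refine E.nonleaf_singleton u ⟨E.parent^[m-1] v, ?_, ?_⟩
    · intro h
      have : m - 1 ∈ {m | E.parent^[m] v = u} := h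
      have := Nat.sInf_le this
      omega
    · show E.parent (E.parent^[m-1] v) = u
      rw [← Function.iterate_succ_apply' E.parent (m-1) v]
      rw [show (m - 1).succ = m from by omega]
      exact hmmem
  set Anc : Set V := {x | ∃ u : ι, u ≠ v ∧ (∃ n, E.parent^[n] v = u) ∧ x ∈ E.bag u}
    with hAncDef
  set f : V → ℕ := fun x => sInf {k | x ∈ E.bag (E.parent^[k] v)} with hf
  have key : ∀ x ∈ Anc, (1 ≤ f x ∧ f x ≤ d) ∧ x ∈ E.bag (E.parent^[f x] v)
      ∧ E.parent^[f x] v ≠ v := by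
    rintro x ⟨u, hune, ⟨n, hn⟩, hxu⟩
    have hn' : ∃ n', 1 ≤ n' ∧ n' ≤ d ∧ x ∈ E.bag (E.parent^[n'] v) := by
      by_cases hnd : n ≤ d
      · refine ⟨n, ?_, hnd, by rw [hn]; exact hxu⟩
        rcases Nat.eq_zero_or_pos n with h0 | h
        · exfalso; rw [h0] at hn; exact hune hn.symm
        · exact h
      · have hst : E.parent^[n] v = E.parent^[d] v := hstab n (le_of_not_ge hnd)
        refine ⟨d, ?_, le_rfl, by rw [← hst, hn]; exact hxu⟩
        rcases Nat.eq_zero_or_pos d with h0 | h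
        · exfalso
          rw [h0] at hst
          simp only [Function.iterate_zero, id_eq] at hst
          rw [hst] at hn
          exact hune hn.symm
        · exact h
    obtain ⟨n', h1n, hnd, hx'⟩ := hn'
    have hfmem : x ∈ E.bag (E.parent^[f x] v) :=
      Nat.sInf_mem (s := {k | x ∈ E.bag (E.parent^[k] v)}) ⟨n', hx'⟩
    have hfle : f x ≤ d := le_trans (Nat.sInf_le hx') hnd
    have hu : u = E.parent^[f x] v := E.bag_unique x u _ hxu hfmem
    have hne : E.parent^[f x] v ≠ v := hu ▸ hune
    have hf1 : 1 ≤ f x := by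
      rcases Nat.eq_zero_or_pos (f x) with h0 | h
      · exfalso
        rw [h0] at hfmem
        simp only [Function.iterate_zero, id_eq] at hfmem
        exact hune (E.bag_unique x u v hxu hfmem)
      · exact h
    exact ⟨⟨hf1, hfle⟩, hfmem, hne⟩
  have hAnccard : Anc.ncard ≤ d := by
    have hinj : Set.InjOn f Anc := by
      intro x hx y hy hxy
      obtain ⟨-, hxb, hxne⟩ := key x hx
      obtain ⟨-, hyb, -⟩ := key y hy
      obtain ⟨w, hw⟩ := hsingl (E.parent^[f x] v) hxne ⟨f x, rfl⟩
      rw [← hxy] at hyb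
      rw [hw] at hxb hyb
      exact hxb.trans hyb.symm
    calc Anc.ncard = (f '' Anc).ncard := (Set.ncard_image_of_injOn hinj).symm
      _ ≤ (Set.Icc 1 d).ncard := by
          refine Set.ncard_le_ncard ?_ (Set.finite_Icc _ _)
          rintro _ ⟨x, hx, rfl⟩
          exact ⟨(key x hx).1.1, (key x hx).1.2⟩
      _ = d := by
          rw [← Finset.coe_Icc, Set.ncard_coe_finset, Nat.card_Icc]
          omega
  set X' : Set V := (X \ B) ∪ Anc with hX'def
  have hFVS : IsFVS G X' := by
    intro a c hc
    by_cases hcase : ∃ z ∈ c.support, (z : V) ∈ B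
    · obtain ⟨z, hz, hzB⟩ := hcase
      have hc' := hc.rotate hz
      have hclosed : ∀ x y : ↥(X'ᶜ), (G.induce X'ᶜ).Adj x y →
          (x : V) ∈ B → (y : V) ∈ B := by
        intro x y hxy hxB
        have hadj : G.Adj (x : V) (y : V) := hxy
        obtain ⟨t, hyt⟩ := E.bag_exists (y : V)
        rcases E.edge_anc (x : V) (y : V) hadj v t hxB hyt with ⟨n, hn⟩ | ⟨n, hn⟩
        · rw [hleafanc n t hn] at hyt
          exact hyt
        · by_cases htv : t = v
          · rw [htv] at hyt; exact hyt
          · have hyA : (y : V) ∈ Anc := ⟨t, htv, ⟨n, hn⟩, hyt⟩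
            exact absurd (Set.mem_union_right _ hyA) y.2
      have hall : ∀ w ∈ (c.rotate z hz).support, (w : V) ∈ B :=
        walk_support_closed hclosed (c.rotate z hz) hzB
      exact no_cycle_transfer (E.leaf_forest v hleaf) (c.rotate z hz) hc' hall
    · push_neg at hcase
      have hall : ∀ w ∈ c.support, (w : V) ∈ Xᶜ := by
        intro w hw hwX
        exact w.2 (Set.mem_union_left _ ⟨hwX, hcase w hw⟩)
      exact no_cycle_transfer hX.1 c hc hall
  have h1 : X.ncard ≤ X'.ncard := hX.2 X' hFVS
  have h2 : X'.ncard ≤ (X \ B).ncard + Anc.ncard := Set.ncard_union_le _ _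
  have h3 : (X \ B).ncard + (X ∩ B).ncard = X.ncard := by
    rw [← Set.ncard_union_eq Set.disjoint_sdiff_inter, Set.diff_union_inter]
  omega
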